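/- Uniqueness of equilibrium by induction on values: Suppose the value set V = {v_1 < v_2 < ... < v_n} is finite, and the functions T, S : V → ℝ satisfy the system S(p) = 1 − Q(1 − F(p) + T(p)) and T(p) = Σ_{v ∈ V, v ≤ p} Σ_u f(v,u) · 1[u(v − p_r) ≥ E_{p'∼S}[u(max(v − p', 0))]], where for each v ∈ V the indicator for types with value v depends on S only through its restriction to values strictly below v (together with the total mass of spot prices below v). Then the system has a unique solution (T, S), and it can be computed by iterating over values in increasing order. -/
import Mathlib

noncomputable def eqS (V : Finset ℝ) (F Q : ℝ → ℝ) (J : ℝ → ℝ) : ℝ → ℝ :=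
  fun p => 1 - Q (1 - F p + ∑ v ∈ V.filter (fun v => v ≤ p), J v)

noncomputable def eqJsub (V : Finset ℝ) (F Q : ℝ → ℝ) (I : ℝ → (ℝ → ℝ) → ℝ) :
    {x // x ∈ V} → ℝ :=
  (Finite.to_wellFoundedLT (α := {x // x ∈ V})).wf.fix
    (fun v rec =>
      I v.1 (eqS V F Q (fun w =>
        if h : w ∈ V then
          if h2 : w < v.1 then rec ⟨w, h⟩ (Subtype.coe_lt_coe.mp h2) else 0
        else 0)))

theorem eqS_congr (V : Finset ℝ) (F Q : ℝ → ℝ) (I : ℝ → (ℝ → ℝ) → ℝ)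
    (hI : ∀ v ∈ V, ∀ S S' : ℝ → ℝ, (∀ p : ℝ, p < v → S p = S' p) → I v S = I v S')
    (v : ℝ) (hv : v ∈ V) (J J' : ℝ → ℝ)
    (h : ∀ w ∈ V, w < v → J w = J' w) :
    I v (eqS V F Q J) = I v (eqS V F Q J') := by
  apply hI v hv
  intro p hp
  have hsum : (∑ w ∈ V.filter (fun w => w ≤ p), J w)
      = ∑ w ∈ V.filter (fun w => w ≤ p), J' w := by
    apply Finset.sum_congr rfl
    intro w hw
    simp only [Finset.mem_filter] at hw
    exact h w hw.1 (lt_of_le_of_lt hw.2 hp)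
  simp [eqS, hsum]

theorem equilibrium_unique (V : Finset ℝ) (F Q : ℝ → ℝ)
    (I : ℝ → (ℝ → ℝ) → ℝ)
    (hI : ∀ v ∈ V, ∀ S S' : ℝ → ℝ, (∀ p : ℝ, p < v → S p = S' p) → I v S = I v S') :
    ∃! TS : (ℝ → ℝ) × (ℝ → ℝ),
      (∀ p : ℝ, TS.1 p = ∑ v ∈ V.filter (fun v => v ≤ p), I v TS.2) ∧
      (∀ p : ℝ, TS.2 p = 1 - Q (1 - F p + TS.1 p)) := by
  classical
  set J : ℝ → ℝ := fun w => if h : w ∈ V then eqJsub V F Q I ⟨w, h⟩ else 0 with hJ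
  have hfix : ∀ v ∈ V, J v = I v (eqS V F Q J) := by
    intro v hv
    have h1 : J v = eqJsub V F Q I ⟨v, hv⟩ := by simp [hJ, hv]
    rw [h1, eqJsub, WellFounded.fix_eq]
    apply eqS_congr V F Q I hI v hv
    intro w hw hwv
    simp [hJ, hw, hwv, eqJsub]
  set S₀ : ℝ → ℝ := eqS V F Q J with hS₀
  set T₀ : ℝ → ℝ := fun p => ∑ v ∈ V.filter (fun v => v ≤ p), I v S₀ with hT₀
  have hsum : ∀ p : ℝ, T₀ p = ∑ v ∈ V.filter (fun v => v ≤ p), J v := by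
    intro p
    apply Finset.sum_congr rfl
    intro w hw
    simp only [Finset.mem_filter] at hw
    exact (hfix w hw.1).symm
  refine ⟨(T₀, S₀), ⟨fun p => rfl, fun p => ?_⟩, ?_⟩
  · show S₀ p = 1 - Q (1 - F p + T₀ p)
    rw [hsum p]; rfl
  rintro ⟨T, S⟩ ⟨hT, hS⟩
  dsimp only at hT hS
  have key : ∀ v : {x // x ∈ V}, I v.1 S = I v.1 S₀ := by
    intro v
    refine WellFounded.induction (C := fun v : {x // x ∈ V} => I v.1 S = I v.1 S₀)
      (Finite.to_wellFoundedLT (α := {x // x ∈ V})).wf v ?_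
    intro v ih
    apply hI v.1 v.2
    intro p hp
    rw [hS p, hS₀]
    show _ = 1 - Q (1 - F p + ∑ w ∈ V.filter (fun w => w ≤ p), J w)
    have : T p = ∑ w ∈ V.filter (fun w => w ≤ p), J w := by
      rw [hT p]
      apply Finset.sum_congr rfl
      intro w hw
      simp only [Finset.mem_filter] at hw
      have hwv : w < v.1 := lt_of_le_of_lt hw.2 hp
      rw [ih ⟨w, hw.1⟩ (Subtype.coe_lt_coe.mp hwv), hfix w hw.1]
    rw [this]
  have hSeq : S = S₀ := by
    funext p
    rw [hS p, hS₀]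
    show _ = 1 - Q (1 - F p + ∑ w ∈ V.filter (fun w => w ≤ p), J w)
    have : T p = ∑ w ∈ V.filter (fun w => w ≤ p), J w := by
      rw [hT p]
      apply Finset.sum_congr rfl
      intro w hw
      simp only [Finset.mem_filter] at hw
      rw [key ⟨w, hw.1⟩, hfix w hw.1]
    rw [this]
  have hTeq : T = T₀ := by
    funext p
    rw [hT p, hT₀]
    exact Finset.sum_congr rfl fun w hw => by rw [hSeq]
  simp [hTeq, hSeq]
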